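/- arXiv:2005.12954 — 4 statements merged into one kernel-verified Lean document; each statement's English description precedes it below -/
import Mathlib

section
/- Let $\rho_1 \colon A \to B \otimes Q_1$ and $\rho_2 \colon A \to B \otimes Q_2$ be linear maps of vector spaces over a field $F$. Then $\cosupp\rho_1 \subseteq \cosupp\rho_2$ if and only if there exists a linear map $\tau \colon \supp\rho_2 \to \supp\rho_1$ with $(\mathrm{id}_B\otimes\tau)\circ\rho_2' = \rho_1'$, where $\rho_i'$ denotes the corestriction of $\rho_i$ to $B\otimes\supp\rho_i$. Moreover, such a $\tau$, when it exists, is unique and surjective. -/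
open TensorProduct

variable {F A B Q : Type*} [Field F] [AddCommGroup A] [Module F A]
  [AddCommGroup B] [Module F B] [AddCommGroup Q] [Module F Q]

/-- `ρ(A) ⊆ B ⊗ Q₁` for a subspace `Q₁ ⊆ Q`. -/
def LiftsTo (ρ : A →ₗ[F] B ⊗[F] Q) (Q₁ : Submodule F Q) : Prop :=
  ∀ a : A, ρ a ∈ LinearMap.range (LinearMap.lTensor B Q₁.subtype)

/-- The support of `ρ : A → B ⊗ Q`: the smallest subspace `Q₁ ⊆ Q` with `ρ(A) ⊆ B ⊗ Q₁`. -/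
noncomputable def lsupp (ρ : A →ₗ[F] B ⊗[F] Q) : Submodule F Q :=
  sInf {Q₁ : Submodule F Q | LiftsTo ρ Q₁}

/-- The linear map `Q^* → Hom(A,B)` sending `q^*` to `(id_B ⊗ q^*) ∘ ρ`. -/
noncomputable def cosuppL (ρ : A →ₗ[F] B ⊗[F] Q) :
    Module.Dual F Q →ₗ[F] (A →ₗ[F] B) where
  toFun q := (TensorProduct.rid F B).toLinearMap ∘ₗ LinearMap.lTensor B q ∘ₗ ρ
  map_add' q₁ q₂ := by
    simp [LinearMap.lTensor_add, LinearMap.add_comp, LinearMap.comp_add]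
  map_smul' c q := by
    simp [LinearMap.lTensor_smul, LinearMap.smul_comp, LinearMap.comp_smul]

/-- The cosupport of `ρ : A → B ⊗ Q`: the image of `Q^* → Hom(A,B)`, `q^* ↦ (id_B ⊗ q^*) ∘ ρ`. -/
noncomputable def lcosupp (ρ : A →ₗ[F] B ⊗[F] Q) : Submodule F (A →ₗ[F] B) :=
  LinearMap.range (cosuppL ρ)

variable {Q₂ : Type*} [AddCommGroup Q₂] [Module F Q₂]

section Aux

open LinearMap

variable {V W : Type*} [AddCommGroup V] [Module F V] [AddCommGroup W] [Module F W]

/-- `φ ⊗ id : B ⊗ V → V`. -/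
noncomputable def evL (φ : Module.Dual F B) : B ⊗[F] V →ₗ[F] V :=
  (TensorProduct.lid F V).toLinearMap ∘ₗ rTensor V φ

@[simp] lemma evL_tmul (φ : Module.Dual F B) (b : B) (v : V) :
    evL φ (b ⊗ₜ[F] v) = φ b • v := by
  simp [evL]

lemma evL_lTensor (φ : Module.Dual F B) (f : V →ₗ[F] W) :
    (evL φ : B ⊗[F] W →ₗ[F] W) ∘ₗ lTensor B f = f ∘ₗ (evL φ : B ⊗[F] V →ₗ[F] V) := by
  apply TensorProduct.ext'
  intro b v
  simp

lemma evL_lTensor_apply (φ : Module.Dual F B) (f : V →ₗ[F] W) (t : B ⊗[F] V) :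
    evL φ (lTensor B f t) = f (evL φ t) :=
  LinearMap.congr_fun (evL_lTensor φ f) t

/-- Separation: the maps `φ ⊗ id` jointly separate points of `B ⊗ V`. -/
lemma evL_sep (t : B ⊗[F] V) (h : ∀ φ : Module.Dual F B, evL φ t = 0) : t = 0 := by
  classical
  let b := Module.Basis.ofVectorSpace F B
  let c := Module.Basis.ofVectorSpace F V
  let bc := b.tensorProduct c
  have hrepr : bc.repr t = 0 := by
    ext ⟨i, j⟩
    have key : (Finsupp.lapply (i, j) ∘ₗ bc.repr.toLinearMap) =
        (Finsupp.lapply j ∘ₗ c.repr.toLinearMap ∘ₗ evL (b.coord i)) := by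
      apply TensorProduct.ext'
      intro x v
      simp [bc, Module.Basis.tensorProduct_repr_tmul_apply, Module.Basis.coord_apply, mul_comm]
    have := LinearMap.congr_fun key t
    simp only [LinearMap.comp_apply, Finsupp.lapply_apply, LinearEquiv.coe_coe] at this
    rw [this, h (b.coord i)]
    simp
  have h0 : bc.repr t = bc.repr 0 := by rw [hrepr]; simp
  exact bc.repr.injective h0

lemma mem_range_lTensor_subtype (t : B ⊗[F] V) (P : Submodule F V)
    (h : ∀ φ : Module.Dual F B, evL φ t ∈ P) :
    t ∈ LinearMap.range (lTensor B P.subtype) := by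
  have hexact := Module.Flat.lTensor_exact (M := B) (LinearMap.exact_subtype_mkQ P)
  rw [← hexact.linearMap_ker_eq, LinearMap.mem_ker]
  apply evL_sep
  intro φ
  rw [evL_lTensor_apply]
  simpa [Submodule.Quotient.mk_eq_zero] using h φ

lemma evL_mem_of_liftsTo {ρ : A →ₗ[F] B ⊗[F] V} {P : Submodule F V} (h : LiftsTo ρ P)
    (φ : Module.Dual F B) (a : A) : evL φ (ρ a) ∈ P := by
  obtain ⟨u, hu⟩ := h a
  rw [← hu, evL_lTensor_apply]
  exact (evL φ u).2

/-- The map `Dual B ⊗ A → V`, `φ ⊗ a ↦ (φ ⊗ id)(ρ a)`. -/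
noncomputable def Kmap (ρ : A →ₗ[F] B ⊗[F] V) : Module.Dual F B ⊗[F] A →ₗ[F] V :=
  TensorProduct.lift
    { toFun := fun φ => evL φ ∘ₗ ρ
      map_add' := fun φ φ' => by ext a; simp [evL, LinearMap.rTensor_add]
      map_smul' := fun c φ => by ext a; simp [evL, LinearMap.rTensor_smul] }

@[simp] lemma Kmap_tmul (ρ : A →ₗ[F] B ⊗[F] V) (φ : Module.Dual F B) (a : A) :
    Kmap ρ (φ ⊗ₜ[F] a) = evL φ (ρ a) := rfl

lemma liftsTo_range_Kmap (ρ : A →ₗ[F] B ⊗[F] V) : LiftsTo ρ (LinearMap.range (Kmap ρ)) :=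
  fun a => mem_range_lTensor_subtype _ _ (fun φ => ⟨φ ⊗ₜ a, rfl⟩)

lemma lsupp_eq_range_Kmap (ρ : A →ₗ[F] B ⊗[F] V) : lsupp ρ = LinearMap.range (Kmap ρ) := by
  apply le_antisymm
  · exact sInf_le (liftsTo_range_Kmap ρ)
  · refine le_sInf fun P hP => ?_
    rintro _ ⟨x, rfl⟩
    induction x using TensorProduct.induction_on with
    | zero => simp
    | tmul φ a => exact evL_mem_of_liftsTo hP φ a
    | add x y hx hy => rw [map_add]; exact P.add_mem hx hy

lemma liftsTo_lsupp (ρ : A →ₗ[F] B ⊗[F] V) : LiftsTo ρ (lsupp ρ) := by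
  rw [lsupp_eq_range_Kmap]; exact liftsTo_range_Kmap ρ

/-- Minimality: a corestriction of `ρ` to its support has full support. -/
lemma corestrict_full (ρ : A →ₗ[F] B ⊗[F] V) (ρ' : A →ₗ[F] B ⊗[F] (lsupp ρ))
    (hρ : lTensor B (lsupp ρ).subtype ∘ₗ ρ' = ρ) (P : Submodule F (lsupp ρ))
    (h : LiftsTo ρ' P) : P = ⊤ := by
  have hQ : LiftsTo ρ (P.map (lsupp ρ).subtype) := by
    intro a
    apply mem_range_lTensor_subtype
    intro φ
    have h1 : evL φ (ρ a) = (lsupp ρ).subtype (evL φ (ρ' a)) := by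
      have h2 : ρ a = LinearMap.lTensor B (lsupp ρ).subtype (ρ' a) :=
        (LinearMap.congr_fun hρ a).symm
      rw [h2, evL_lTensor_apply]
    rw [h1]
    exact Submodule.mem_map_of_mem (evL_mem_of_liftsTo h φ a)
  have hle : lsupp ρ ≤ P.map (lsupp ρ).subtype := sInf_le hQ
  ext x
  simp only [Submodule.mem_top, iff_true]
  obtain ⟨y, hy, hxy⟩ := hle x.2
  have hyx : y = x := Subtype.ext hxy
  rwa [← hyx]

lemma sigma_eq_zero (ρ : A →ₗ[F] B ⊗[F] V) (ρ' : A →ₗ[F] B ⊗[F] (lsupp ρ))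
    (hρ : lTensor B (lsupp ρ).subtype ∘ₗ ρ' = ρ) (σ : (lsupp ρ) →ₗ[F] W)
    (h : lTensor B σ ∘ₗ ρ' = 0) : σ = 0 := by
  have hexact := Module.Flat.lTensor_exact (M := B) (LinearMap.exact_subtype_ker_map σ)
  have hlift : LiftsTo ρ' (LinearMap.ker σ) := by
    intro a
    rw [← hexact.linearMap_ker_eq, LinearMap.mem_ker]
    exact LinearMap.congr_fun h a
  exact LinearMap.ker_eq_top.mp (corestrict_full ρ ρ' hρ _ hlift)

lemma evL_coev (φ : Module.Dual F B) (ψ : Module.Dual F V) :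
    (ψ ∘ₗ (evL φ : B ⊗[F] V →ₗ[F] V)) =
      (φ ∘ₗ (TensorProduct.rid F B).toLinearMap ∘ₗ lTensor B ψ) := by
  apply TensorProduct.ext'
  intro b v
  simp [mul_comm]

end Aux

/-- `cosupp ρ₁ ⊆ cosupp ρ₂` iff there is a linear map `τ : supp ρ₂ → supp ρ₁` with
`(id_B ⊗ τ) ∘ ρ₂' = ρ₁'`, where `ρᵢ'` is the corestriction of `ρᵢ` to `B ⊗ supp ρᵢ`.
Moreover such a `τ`, when it exists, is unique and surjective. -/
theorem lcosupp_le_iff_exists_factor (ρ₁ : A →ₗ[F] B ⊗[F] Q) (ρ₂ : A →ₗ[F] B ⊗[F] Q₂)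
    (ρ₁' : A →ₗ[F] B ⊗[F] (lsupp ρ₁)) (hρ₁ : LinearMap.lTensor B (lsupp ρ₁).subtype ∘ₗ ρ₁' = ρ₁)
    (ρ₂' : A →ₗ[F] B ⊗[F] (lsupp ρ₂)) (hρ₂ : LinearMap.lTensor B (lsupp ρ₂).subtype ∘ₗ ρ₂' = ρ₂) :
    (lcosupp ρ₁ ≤ lcosupp ρ₂ ↔
      ∃ τ : (lsupp ρ₂) →ₗ[F] (lsupp ρ₁), LinearMap.lTensor B τ ∘ₗ ρ₂' = ρ₁') ∧
    (∀ τ τ' : (lsupp ρ₂) →ₗ[F] (lsupp ρ₁),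
      LinearMap.lTensor B τ ∘ₗ ρ₂' = ρ₁' → LinearMap.lTensor B τ' ∘ₗ ρ₂' = ρ₁' → τ = τ') ∧
    (∀ τ : (lsupp ρ₂) →ₗ[F] (lsupp ρ₁),
      LinearMap.lTensor B τ ∘ₗ ρ₂' = ρ₁' → Function.Surjective τ) := by
  classical
  refine ⟨⟨fun h => ?_, fun ⟨τ, hτ⟩ => ?_⟩, fun τ τ' hτ hτ' => ?_, fun τ hτ => ?_⟩
  · -- existence
    have hK₂ : ∀ x, Kmap ρ₂ x ∈ lsupp ρ₂ := fun x => (lsupp_eq_range_Kmap ρ₂).ge ⟨x, rfl⟩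
    have hK₁ : ∀ x, Kmap ρ₁ x ∈ lsupp ρ₁ := fun x => (lsupp_eq_range_Kmap ρ₁).ge ⟨x, rfl⟩
    let K₂' : Module.Dual F B ⊗[F] A →ₗ[F] lsupp ρ₂ := (Kmap ρ₂).codRestrict (lsupp ρ₂) hK₂
    let K₁' : Module.Dual F B ⊗[F] A →ₗ[F] lsupp ρ₁ := (Kmap ρ₁).codRestrict (lsupp ρ₁) hK₁
    have hsurj : Function.Surjective K₂' := by
      rintro ⟨q, hq⟩
      rw [lsupp_eq_range_Kmap] at hq
      obtain ⟨x, hx⟩ := hq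
      exact ⟨x, Subtype.ext hx⟩
    have hker : LinearMap.ker K₂' ≤ LinearMap.ker K₁' := by
      intro x hx
      rw [LinearMap.mem_ker] at hx ⊢
      have hx2 : Kmap ρ₂ x = 0 := by
        have h0 := Subtype.ext_iff.mp hx
        simpa [K₂'] using h0
      apply Subtype.ext
      show Kmap ρ₁ x = ((0 : lsupp ρ₁) : Q)
      rw [ZeroMemClass.coe_zero]
      rw [← Module.forall_dual_apply_eq_zero_iff F]
      intro ψ
      obtain ⟨p, hp⟩ := h (LinearMap.mem_range.mpr ⟨ψ, rfl⟩)
      have key : (ψ ∘ₗ Kmap ρ₁ : Module.Dual F B ⊗[F] A →ₗ[F] F) = p ∘ₗ Kmap ρ₂ := by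
        apply TensorProduct.ext'
        intro φ a
        have e1 := LinearMap.congr_fun (evL_coev (V := Q) φ ψ) (ρ₁ a)
        have e2 := LinearMap.congr_fun (evL_coev (V := Q₂) φ p) (ρ₂ a)
        simp only [LinearMap.comp_apply, LinearEquiv.coe_coe] at e1 e2
        have hpa : cosuppL ρ₂ p a = cosuppL ρ₁ ψ a := LinearMap.congr_fun hp a
        simp only [Kmap_tmul, LinearMap.comp_apply]
        rw [e1, e2]
        congr 1
        exact hpa.symm.trans rfl
      have hxk := LinearMap.congr_fun key x
      simp only [LinearMap.comp_apply, hx2, map_zero] at hxk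
      exact hxk
    obtain ⟨s, hs⟩ := K₂'.exists_rightInverse_of_surjective (LinearMap.range_eq_top.mpr hsurj)
    let τ : (lsupp ρ₂) →ₗ[F] (lsupp ρ₁) := K₁' ∘ₗ s
    have hτK : ∀ x, τ (K₂' x) = K₁' x := by
      intro x
      have hmem : s (K₂' x) - x ∈ LinearMap.ker K₂' := by
        rw [LinearMap.mem_ker, map_sub, ← LinearMap.comp_apply, hs, LinearMap.id_apply, sub_self]
      have hm := hker hmem
      rw [LinearMap.mem_ker, map_sub, sub_eq_zero] at hm
      show K₁' (s (K₂' x)) = K₁' x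
      exact hm
    refine ⟨τ, ?_⟩
    ext a
    rw [LinearMap.comp_apply, ← sub_eq_zero]
    apply evL_sep
    intro φ
    rw [map_sub, evL_lTensor_apply]
    have h2 : evL φ (ρ₂' a) = K₂' (φ ⊗ₜ[F] a) := by
      apply Subtype.ext
      show (lsupp ρ₂).subtype (evL φ (ρ₂' a)) = Kmap ρ₂ (φ ⊗ₜ[F] a)
      rw [← evL_lTensor_apply]
      have e2 : LinearMap.lTensor B (lsupp ρ₂).subtype (ρ₂' a) = ρ₂ a :=
        LinearMap.congr_fun hρ₂ a
      rw [e2, Kmap_tmul]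
    have h1 : evL φ (ρ₁' a) = K₁' (φ ⊗ₜ[F] a) := by
      apply Subtype.ext
      show (lsupp ρ₁).subtype (evL φ (ρ₁' a)) = Kmap ρ₁ (φ ⊗ₜ[F] a)
      rw [← evL_lTensor_apply]
      have e1 : LinearMap.lTensor B (lsupp ρ₁).subtype (ρ₁' a) = ρ₁ a :=
        LinearMap.congr_fun hρ₁ a
      rw [e1, Kmap_tmul]
    rw [h2, h1, hτK, sub_self]
  · -- h ⇐: given τ, cosupp inclusion
    rintro f ⟨ψ, rfl⟩
    obtain ⟨p, hp⟩ := LinearMap.exists_extend ((ψ ∘ₗ (lsupp ρ₁).subtype) ∘ₗ τ)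
    refine ⟨p, ?_⟩
    ext a
    show (TensorProduct.rid F B) (LinearMap.lTensor B p (ρ₂ a)) =
      (TensorProduct.rid F B) (LinearMap.lTensor B ψ (ρ₁ a))
    have e2 : ρ₂ a = LinearMap.lTensor B (lsupp ρ₂).subtype (ρ₂' a) :=
      (LinearMap.congr_fun hρ₂ a).symm
    have e1 : ρ₁ a = LinearMap.lTensor B (lsupp ρ₁).subtype (ρ₁' a) :=
      (LinearMap.congr_fun hρ₁ a).symm
    have eτ : LinearMap.lTensor B τ (ρ₂' a) = ρ₁' a := LinearMap.congr_fun hτ a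
    congr 1
    calc LinearMap.lTensor B p (ρ₂ a)
        = LinearMap.lTensor B p (LinearMap.lTensor B (lsupp ρ₂).subtype (ρ₂' a)) := by
          rw [← e2]
      _ = LinearMap.lTensor B (p ∘ₗ (lsupp ρ₂).subtype) (ρ₂' a) := by
          rw [LinearMap.lTensor_comp]; rfl
      _ = LinearMap.lTensor B ((ψ ∘ₗ (lsupp ρ₁).subtype) ∘ₗ τ) (ρ₂' a) := by rw [hp]
      _ = LinearMap.lTensor B (ψ ∘ₗ (lsupp ρ₁).subtype) (LinearMap.lTensor B τ (ρ₂' a)) := by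
          rw [LinearMap.lTensor_comp]; rfl
      _ = LinearMap.lTensor B (ψ ∘ₗ (lsupp ρ₁).subtype) (ρ₁' a) := by rw [eτ]
      _ = LinearMap.lTensor B ψ (LinearMap.lTensor B (lsupp ρ₁).subtype (ρ₁' a)) := by
          rw [LinearMap.lTensor_comp]; rfl
      _ = LinearMap.lTensor B ψ (ρ₁ a) := by rw [← e1]
  · -- uniqueness
    have : LinearMap.lTensor B (τ - τ') ∘ₗ ρ₂' = 0 := by
      rw [LinearMap.lTensor_sub, LinearMap.sub_comp, hτ, hτ']
      ext a
      simp
    have := sigma_eq_zero ρ₂ ρ₂' hρ₂ (τ - τ') this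
    rwa [sub_eq_zero] at this
  · -- surjectivity
    have hlift : LiftsTo ρ₁' (LinearMap.range τ) := by
      intro a
      apply mem_range_lTensor_subtype
      intro φ
      have : ρ₁' a = LinearMap.lTensor B τ (ρ₂' a) := (LinearMap.congr_fun hτ a).symm
      rw [this, evL_lTensor_apply]
      exact ⟨_, rfl⟩
    exact LinearMap.range_eq_top.mp (corestrict_full ρ₁ ρ₁' hρ₁ _ hlift)
end

section
/- Let $\rho_1 \colon A \to B \otimes Q_1$ and $\rho_2 \colon A \to B \otimes Q_2$ be linear maps of vector spaces over a field $F$ with equal cosupports, i.e. $\cosupp\rho_1 = \cosupp\rho_2$. Then the unique linear map $\tau\colon\supp\rho_2\to\supp\rho_1$ satisfying $(\mathrm{id}_B\otimes\tau)\circ\rho_2' = \rho_1'$ (where $\rho_i'$ is the corestriction of $\rho_i$ to $B\otimes\supp\rho_i$) is a linear isomorphism. -/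
open TensorProduct

variable {F A B Q : Type*} [Field F] [AddCommGroup A] [Module F A]
  [AddCommGroup B] [Module F B] [AddCommGroup Q] [Module F Q]

section Aux

variable {F A B : Type*} [Field F] [AddCommGroup A] [Module F A]
  [AddCommGroup B] [Module F B]

/-- Compatibility of `cosuppL` with composition by a tensored map. -/
lemma cosuppL_lTensor_comp {P P' : Type*} [AddCommGroup P] [Module F P]
    [AddCommGroup P'] [Module F P'] (σ : A →ₗ[F] B ⊗[F] P) (g : P →ₗ[F] P')
    (f : Module.Dual F P') :
    cosuppL (LinearMap.lTensor B g ∘ₗ σ) f = cosuppL σ (f ∘ₗ g) := by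
  ext a
  simp [cosuppL, ← LinearMap.lTensor_comp_apply]

/-- The cosupport map of a corestriction of `ρ` to its support is injective. -/
lemma cosuppL_corestrict_injective {Q : Type*} [AddCommGroup Q] [Module F Q]
    (ρ : A →ₗ[F] B ⊗[F] Q) (ρ' : A →ₗ[F] B ⊗[F] (lsupp ρ))
    (hρ : LinearMap.lTensor B (lsupp ρ).subtype ∘ₗ ρ' = ρ) :
    Function.Injective (cosuppL ρ' : Module.Dual F (lsupp ρ) →ₗ[F] (A →ₗ[F] B)) := by
  rw [injective_iff_map_eq_zero]
  intro f hf
  have h0 : ∀ a : A, LinearMap.lTensor B f (ρ' a) = 0 := by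
    intro a
    have := congrArg (fun g => (TensorProduct.rid F B).symm ((g : A →ₗ[F] B) a)) hf
    simpa [cosuppL] using this
  have hker : ∀ a : A, ρ' a ∈
      LinearMap.range (LinearMap.lTensor B (LinearMap.ker f).subtype) := by
    intro a
    have hexact := Module.Flat.lTensor_exact (R := F) B
      (LinearMap.exact_subtype_ker_map f)
    exact (hexact (ρ' a)).mp (h0 a)
  set K : Submodule F Q := (LinearMap.ker f).map (lsupp ρ).subtype with hK
  have hlifts : LiftsTo ρ K := by
    intro a
    obtain ⟨y, hy⟩ := hker a
    let e : (LinearMap.ker f) →ₗ[F] K :=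
      LinearMap.codRestrict K ((lsupp ρ).subtype ∘ₗ (LinearMap.ker f).subtype)
        (fun x => Submodule.mem_map_of_mem x.2)
    have he : K.subtype ∘ₗ e = (lsupp ρ).subtype ∘ₗ (LinearMap.ker f).subtype := rfl
    refine ⟨LinearMap.lTensor B e y, ?_⟩
    rw [← LinearMap.lTensor_comp_apply, he, LinearMap.lTensor_comp_apply, hy,
      ← LinearMap.comp_apply, hρ]
  have hle : lsupp ρ ≤ K := sInf_le hlifts
  ext x
  obtain ⟨y, hy, hyx⟩ := hle x.2
  have hxy : y = x := Subtype.ext hyx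
  simp only [LinearMap.zero_apply]
  rw [← hxy]
  exact hy

/-- The range of the cosupport map of a corestriction of `ρ` equals `lcosupp ρ`. -/
lemma cosuppL_corestrict_range {Q : Type*} [AddCommGroup Q] [Module F Q]
    (ρ : A →ₗ[F] B ⊗[F] Q) (ρ' : A →ₗ[F] B ⊗[F] (lsupp ρ))
    (hρ : LinearMap.lTensor B (lsupp ρ).subtype ∘ₗ ρ' = ρ) :
    LinearMap.range (cosuppL ρ' : Module.Dual F (lsupp ρ) →ₗ[F] (A →ₗ[F] B))
      = lcosupp ρ := by
  apply le_antisymm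
  · rintro - ⟨f, rfl⟩
    obtain ⟨g, hg⟩ := LinearMap.exists_extend f
    refine ⟨g, ?_⟩
    rw [← hg, ← cosuppL_lTensor_comp, hρ]
  · rintro - ⟨g, rfl⟩
    refine ⟨g ∘ₗ (lsupp ρ).subtype, ?_⟩
    rw [← cosuppL_lTensor_comp, hρ]

end Aux

variable {Q₂ : Type*} [AddCommGroup Q₂] [Module F Q₂]

/-- If `ρ₁` and `ρ₂` have equal cosupports, then any linear map `τ : supp ρ₂ → supp ρ₁`
satisfying `(id_B ⊗ τ) ∘ ρ₂' = ρ₁'` is a linear isomorphism (i.e. bijective). -/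
theorem factor_bijective_of_lcosupp_eq (ρ₁ : A →ₗ[F] B ⊗[F] Q) (ρ₂ : A →ₗ[F] B ⊗[F] Q₂)
    (h : lcosupp ρ₁ = lcosupp ρ₂)
    (ρ₁' : A →ₗ[F] B ⊗[F] (lsupp ρ₁)) (hρ₁ : LinearMap.lTensor B (lsupp ρ₁).subtype ∘ₗ ρ₁' = ρ₁)
    (ρ₂' : A →ₗ[F] B ⊗[F] (lsupp ρ₂)) (hρ₂ : LinearMap.lTensor B (lsupp ρ₂).subtype ∘ₗ ρ₂' = ρ₂)
    (τ : (lsupp ρ₂) →ₗ[F] (lsupp ρ₁)) (hτ : LinearMap.lTensor B τ ∘ₗ ρ₂' = ρ₁') :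
    Function.Bijective τ := by
  rw [← LinearMap.dualMap_bijective_iff]
  have key : ∀ f : Module.Dual F (lsupp ρ₁),
      cosuppL ρ₁' f = cosuppL ρ₂' (τ.dualMap f) := by
    intro f
    rw [← hτ, cosuppL_lTensor_comp]
    rfl
  have hinj₁ := cosuppL_corestrict_injective ρ₁ ρ₁' hρ₁
  have hinj₂ := cosuppL_corestrict_injective ρ₂ ρ₂' hρ₂
  have hrange : LinearMap.range (cosuppL ρ₁') = LinearMap.range (cosuppL ρ₂') := by
    rw [cosuppL_corestrict_range ρ₁ ρ₁' hρ₁, cosuppL_corestrict_range ρ₂ ρ₂' hρ₂, h]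
  constructor
  · intro f g hfg
    apply hinj₁
    rw [key, key, hfg]
  · intro g
    have : cosuppL ρ₂' g ∈ LinearMap.range (cosuppL ρ₁') := by
      rw [hrange]; exact ⟨g, rfl⟩
    obtain ⟨f, hf⟩ := this
    exact ⟨f, hinj₂ (by rw [← key, hf])⟩
end

section
/- For any vector spaces $A$, $B$, $Q$ over a field $F$ and any linear map $\rho \colon A \to B \otimes Q$, the subspace $\{(\mathrm{id}_B \otimes q^*)\circ\rho \mid q^* \in Q^*\} \subseteq \mathrm{Hom}_F(A,B)$ is closed in the finite topology on $\mathrm{Hom}_F(A,B)$. -/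
open TensorProduct

variable {F A B Q : Type*} [Field F] [AddCommGroup A] [Module F A]
  [AddCommGroup B] [Module F B] [AddCommGroup Q] [Module F Q]

/-- The finite topology on `Hom_F(A,B)`: the topology of pointwise convergence,
where `B` carries the discrete topology. -/
def finiteTopology (F A B : Type*) [Field F] [AddCommGroup A] [Module F A]
    [AddCommGroup B] [Module F B] : TopologicalSpace (A →ₗ[F] B) :=
  TopologicalSpace.induced (fun f : A →ₗ[F] B => (f : A → B))
    (@Pi.topologicalSpace A (fun _ => B) (fun _ => ⊥))

lemma range_lTensor_mono {N₁ N₂ : Submodule F Q} (h : N₁ ≤ N₂) :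
    LinearMap.range (LinearMap.lTensor B N₁.subtype) ≤
      LinearMap.range (LinearMap.lTensor B N₂.subtype) := by
  have : N₁.subtype = N₂.subtype ∘ₗ Submodule.inclusion h := rfl
  rw [this, LinearMap.lTensor_comp]
  exact fun x ⟨y, hy⟩ => ⟨LinearMap.lTensor B (Submodule.inclusion h) y, hy⟩

lemma exists_fd_submodule (t : B ⊗[F] Q) :
    ∃ N : Submodule F Q, FiniteDimensional F N ∧
      t ∈ LinearMap.range (LinearMap.lTensor B N.subtype) := by
  classical
  obtain ⟨S, rfl⟩ := TensorProduct.exists_finset t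
  refine ⟨Submodule.span F (S.image Prod.snd : Set Q), inferInstance, ?_⟩
  refine ⟨S.attach.sum fun i => i.1.1 ⊗ₜ ⟨i.1.2, Submodule.subset_span ?_⟩, ?_⟩
  · exact Finset.mem_coe.mpr (Finset.mem_image_of_mem _ i.2)
  · rw [map_sum]
    rw [← Finset.sum_attach S fun i => i.1 ⊗ₜ[F] i.2]
    rfl

lemma exists_fd_submodule_finset (ρ : A →ₗ[F] B ⊗[F] Q) (s : Finset A) :
    ∃ N : Submodule F Q, FiniteDimensional F N ∧
      ∀ a ∈ s, ρ a ∈ LinearMap.range (LinearMap.lTensor B N.subtype) := by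
  classical
  induction s using Finset.induction with
  | empty => exact ⟨⊥, inferInstance, by simp⟩
  | @insert a s ha ih =>
    obtain ⟨N, hN, hmem⟩ := ih
    obtain ⟨N', hN', hmem'⟩ := exists_fd_submodule (ρ a)
    refine ⟨N ⊔ N', Submodule.finiteDimensional_sup N N', ?_⟩
    intro b hb
    rcases Finset.mem_insert.mp hb with rfl | hb
    · exact range_lTensor_mono le_sup_right hmem'
    · exact range_lTensor_mono le_sup_left (hmem b hb)

lemma dep {ρ : A →ₗ[F] B ⊗[F] Q} (N : Submodule F Q) {q₁ q₂ : Module.Dual F Q}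
    (h : q₁ ∘ₗ N.subtype = q₂ ∘ₗ N.subtype) {a : A}
    (ha : ρ a ∈ LinearMap.range (LinearMap.lTensor B N.subtype)) :
    cosuppL ρ q₁ a = cosuppL ρ q₂ a := by
  obtain ⟨u, hu⟩ := ha
  have key : ∀ q : Module.Dual F Q,
      LinearMap.lTensor B q (ρ a) = LinearMap.lTensor B (q ∘ₗ N.subtype) u := by
    intro q
    rw [← hu, ← LinearMap.lTensor_comp_apply]
  show (TensorProduct.rid F B) (LinearMap.lTensor B q₁ (ρ a)) =
    (TensorProduct.rid F B) (LinearMap.lTensor B q₂ (ρ a))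
  rw [key q₁, key q₂, h]

/-- A prescription of values that is finitely realizable is globally realizable. -/
lemma ext_prescription (P : Set (Q × F))
    (h : ∀ t : Finset (Q × F), ↑t ⊆ P → ∃ g : Module.Dual F Q, ∀ p ∈ t, g p.1 = p.2) :
    ∃ g : Module.Dual F Q, ∀ p ∈ P, g p.1 = p.2 := by
  classical
  set R : Submodule F (Q × F) := Submodule.span F P with hR
  have hzero : ∀ c : F, ((0 : Q), c) ∈ R → c = 0 := by
    intro c hc
    obtain ⟨t, htP, hmem⟩ := Submodule.mem_span_finite_of_mem_span hc
    obtain ⟨g, hg⟩ := h t htP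
    have hker : Submodule.span F (t : Set (Q × F)) ≤
        LinearMap.ker (LinearMap.snd F Q F - g ∘ₗ LinearMap.fst F Q F) := by
      rw [Submodule.span_le]
      intro p hp
      simp only [SetLike.mem_coe, LinearMap.mem_ker, LinearMap.sub_apply, LinearMap.coe_comp,
        Function.comp_apply, LinearMap.fst_apply, LinearMap.snd_apply]
      rw [hg p hp]
      exact sub_self _
    have := hker hmem
    simpa using this
  -- the graph is a partial linear map
  set Q₁ : Submodule F Q := R.map (LinearMap.fst F Q F) with hQ₁
  have e_bij : Function.Bijective ((LinearMap.fst F Q F).restrict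
      (fun x (hx : x ∈ R) => Submodule.mem_map_of_mem hx : ∀ x ∈ R, x.1 ∈ Q₁)) := by
    constructor
    · rintro ⟨⟨x1, x2⟩, hx⟩ ⟨⟨y1, y2⟩, hy⟩ hxy
      have h1 : x1 = y1 := congrArg Subtype.val hxy
      subst h1
      have : ((0 : Q), x2 - y2) ∈ R := by
        have := R.sub_mem hx hy
        simpa using this
      obtain rfl : x2 = y2 := sub_eq_zero.mp (hzero _ this)
      rfl
    · rintro ⟨q, x, hx, hx1⟩
      exact ⟨⟨x, hx⟩, Subtype.ext hx1⟩
  set e := LinearEquiv.ofBijective _ e_bij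
  set h₁ : Q₁ →ₗ[F] F := (LinearMap.snd F Q F) ∘ₗ R.subtype ∘ₗ (e.symm : Q₁ →ₗ[F] R)
  obtain ⟨g, hg⟩ := LinearMap.exists_extend h₁
  refine ⟨g, ?_⟩
  intro p hp
  have hpR : p ∈ R := Submodule.subset_span hp
  have hp1 : p.1 ∈ Q₁ := Submodule.mem_map_of_mem hpR
  have : g p.1 = h₁ ⟨p.1, hp1⟩ := by
    have := LinearMap.congr_fun hg ⟨p.1, hp1⟩
    simpa using this
  rw [this]
  -- h₁ ⟨p.1⟩ = snd (e.symm ⟨p.1⟩); e.symm ⟨p.1⟩ = some (p.1, c) ∈ R; show c = p.2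
  set x : ↥R := e.symm ⟨p.1, hp1⟩ with hx
  have hex : (x : Q × F).1 = p.1 := by
    have : e x = ⟨p.1, hp1⟩ := by rw [hx]; exact e.apply_symm_apply _
    exact congrArg Subtype.val this
  have hdiff : ((0 : Q), (x : Q × F).2 - p.2) ∈ R := by
    have := R.sub_mem x.2 hpR
    have h2 : (x : Q × F) - p = ((0 : Q), (x : Q × F).2 - p.2) := by
      ext
      · simp [hex]
      · simp
    rwa [h2] at this
  have hval : (x : Q × F).2 = p.2 := sub_eq_zero.mp (hzero _ hdiff)
  show (LinearMap.snd F Q F) (R.subtype x) = p.2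
  simpa using hval

lemma main_lemma (ρ : A →ₗ[F] B ⊗[F] Q) (f : A →ₗ[F] B)
    (h : ∀ s : Finset A, ∃ q : Module.Dual F Q, ∀ a ∈ s, cosuppL ρ q a = f a) :
    ∃ q : Module.Dual F Q, cosuppL ρ q = f := by
  classical
  set Good : Set (Q × F) → Prop := fun G =>
    ∀ s : Finset A, ∃ q : Module.Dual F Q,
      (∀ p ∈ G, q p.1 = p.2) ∧ ∀ a ∈ s, cosuppL ρ q a = f a with hGood
  -- Zorn chain step
  have hchain : ∀ C ⊆ {G | Good G}, IsChain (· ⊆ ·) C → C.Nonempty →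
      ∃ ub ∈ {G | Good G}, ∀ G ∈ C, G ⊆ ub := by
    intro C hCg hC hCne
    refine ⟨⋃₀ C, ?_, fun G hG => Set.subset_sUnion_of_mem hG⟩
    intro s
    obtain ⟨N, hNfd, hNmem⟩ := exists_fd_submodule_finset ρ s
    haveI := hNfd
    set X : Set (Q × F) → Set (Module.Dual F ↥N) := fun G =>
      {ψ | ∃ q : Module.Dual F Q, (∀ p ∈ G, q p.1 = p.2) ∧
        (∀ a ∈ s, cosuppL ρ q a = f a) ∧ q ∘ₗ N.subtype = ψ} with hX
    have hXne : ∀ G ∈ C, (X G).Nonempty := by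
      intro G hG
      obtain ⟨q, hq1, hq2⟩ := hCg hG s
      exact ⟨q ∘ₗ N.subtype, q, hq1, hq2, rfl⟩
    have hXmono : ∀ G G' : Set (Q × F), G ⊆ G' → X G' ⊆ X G := by
      rintro G G' hGG' ψ ⟨q, hq1, hq2, hq3⟩
      exact ⟨q, fun p hp => hq1 p (hGG' hp), hq2, hq3⟩
    have hXa : ∀ G ψ ψ₁ ψ₂, ψ ∈ X G → ψ₁ ∈ X G → ψ₂ ∈ X G → ψ + (ψ₁ - ψ₂) ∈ X G := by
      rintro G ψ ψ₁ ψ₂ ⟨q, hq1, hq2, hq3⟩ ⟨q₁, hq11, hq12, hq13⟩ ⟨q₂, hq21, hq22, hq23⟩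
      refine ⟨q + (q₁ - q₂), fun p hp => ?_, fun a ha => ?_, ?_⟩
      · simp [hq1 p hp, hq11 p hp, hq21 p hp]
      · simp [map_add, map_sub, hq2 a ha, hq12 a ha, hq22 a ha]
      · rw [LinearMap.add_comp, LinearMap.sub_comp, hq3, hq13, hq23]
    have hXb : ∀ G (c : F) ψ₁ ψ₂, ψ₁ ∈ X G → ψ₂ ∈ X G → c • ψ₁ + (1 - c) • ψ₂ ∈ X G := by
      rintro G c ψ₁ ψ₂ ⟨q₁, hq11, hq12, hq13⟩ ⟨q₂, hq21, hq22, hq23⟩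
      refine ⟨c • q₁ + (1 - c) • q₂, fun p hp => ?_, fun a ha => ?_, ?_⟩
      · simp only [LinearMap.add_apply, LinearMap.smul_apply, hq11 p hp, hq21 p hp, smul_eq_mul]
        ring
      · simp only [map_add, map_smul, LinearMap.add_apply, LinearMap.smul_apply,
          hq12 a ha, hq22 a ha, smul_eq_mul]
        rw [← add_smul]
        simp
      · rw [LinearMap.add_comp, LinearMap.smul_comp, LinearMap.smul_comp, hq13, hq23]
    set D : Set (Q × F) → Set (Module.Dual F ↥N) := fun G =>
      {d | ∃ ψ₁ ∈ X G, ∃ ψ₂ ∈ X G, d = ψ₁ - ψ₂} with hD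
    have hXspan : ∀ G, ∀ d ∈ Submodule.span F (D G), ∀ ψ ∈ X G, ψ + d ∈ X G := by
      intro G d hd
      induction hd using Submodule.span_induction with
      | mem x hx =>
        obtain ⟨ψ₁, hψ₁, ψ₂, hψ₂, rfl⟩ := hx
        intro ψ hψ
        exact hXa G ψ ψ₁ ψ₂ hψ hψ₁ hψ₂
      | zero => intro ψ hψ; simpa using hψ
      | add x y hx hy ihx ihy =>
        intro ψ hψ
        have := ihy (ψ + x) (ihx ψ hψ)
        rwa [add_assoc] at this
      | smul c x hx ihx =>
        intro ψ hψ
        have h1 : c • (ψ + x) + (1 - c) • ψ ∈ X G := hXb G c _ _ (ihx ψ hψ) hψ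
        have h2 : c • (ψ + x) + (1 - c) • ψ = ψ + c • x := by
          module
        rwa [h2] at h1
    -- pick minimal finrank
    set n : Set (Q × F) → ℕ := fun G => Module.finrank F (Submodule.span F (D G)) with hn
    have himg : (n '' C).Nonempty := hCne.image n
    obtain ⟨G₀, hG₀C, hG₀min⟩ : ∃ G₀ ∈ C, ∀ G ∈ C, n G₀ ≤ n G := by
      obtain ⟨G₀, hG₀C, hval⟩ := Nat.sInf_mem himg
      exact ⟨G₀, hG₀C, fun G hG => hval ▸ Nat.sInf_le ⟨G, hG, rfl⟩⟩
    have hkey : ∀ G ∈ C, X G₀ ⊆ X G := by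
      intro G hG
      rcases hC.total hG₀C hG with hle | hle
      · -- G₀ ⊆ G
        have hDmono : D G ⊆ D G₀ := by
          rintro d ⟨ψ₁, hψ₁, ψ₂, hψ₂, rfl⟩
          exact ⟨ψ₁, hXmono _ _ hle hψ₁, ψ₂, hXmono _ _ hle hψ₂, rfl⟩
        have hspan : Submodule.span F (D G) ≤ Submodule.span F (D G₀) :=
          Submodule.span_mono hDmono
        have heq : Submodule.span F (D G) = Submodule.span F (D G₀) :=
          Submodule.eq_of_le_of_finrank_le hspan (hG₀min G hG)
        intro ψ hψ
        obtain ⟨x, hx⟩ := hXne G hG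
        have hxG₀ : x ∈ X G₀ := hXmono _ _ hle hx
        have hdmem : ψ - x ∈ Submodule.span F (D G) := by
          rw [heq]
          exact Submodule.subset_span ⟨ψ, hψ, x, hxG₀, rfl⟩
        have := hXspan G _ hdmem x hx
        rwa [add_sub_cancel] at this
      · exact hXmono _ _ hle
    obtain ⟨ψ, hψG₀⟩ := hXne G₀ hG₀C
    have hψall : ∀ G ∈ C, ψ ∈ X G := fun G hG => hkey G hG hψG₀
    -- build prescription
    set Z : Set (Q × F) := {p | ∃ nn : ↥N, p = ((nn : Q), ψ nn)} with hZ
    set P : Set (Q × F) := ⋃₀ C ∪ Z with hP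
    have hreal : ∀ t : Finset (Q × F), ↑t ⊆ P → ∃ g : Module.Dual F Q, ∀ p ∈ t, g p.1 = p.2 := by
      intro t ht
      -- find a single G ∈ C containing the union part
      have : ∃ G ∈ C, ↑t ⊆ G ∪ Z := by
        classical
        induction t using Finset.induction with
        | empty =>
          obtain ⟨G, hG⟩ := hCne
          exact ⟨G, hG, by simp⟩
        | @insert p t hp ih =>
          have ht' : ↑t ⊆ P := by
            intro x hx
            exact ht (by simp [hx])
          obtain ⟨G₁, hG₁, hG₁sub⟩ := ih ht'
          have hpP : p ∈ P := ht (by simp)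
          rcases hpP with hpU | hpZ
          · obtain ⟨G₂, hG₂, hpG₂⟩ := hpU
            rcases hC.total hG₁ hG₂ with hle | hle
            · refine ⟨G₂, hG₂, ?_⟩
              intro x hx
              rcases Finset.mem_insert.mp (by exact_mod_cast hx) with rfl | hx'
              · exact Or.inl hpG₂
              · rcases hG₁sub hx' with h1 | h2
                · exact Or.inl (hle h1)
                · exact Or.inr h2
            · refine ⟨G₁, hG₁, ?_⟩
              intro x hx
              rcases Finset.mem_insert.mp (by exact_mod_cast hx) with rfl | hx'
              · exact Or.inl (hle hpG₂)
              · exact hG₁sub hx'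
          · refine ⟨G₁, hG₁, ?_⟩
            intro x hx
            rcases Finset.mem_insert.mp (by exact_mod_cast hx) with rfl | hx'
            · exact Or.inr hpZ
            · exact hG₁sub hx'
      obtain ⟨G, hGC, htsub⟩ := this
      obtain ⟨q, hq1, _, hq3⟩ := hψall G hGC
      refine ⟨q, fun p hp => ?_⟩
      rcases htsub hp with h1 | h2
      · exact hq1 p h1
      · obtain ⟨nn, rfl⟩ := h2
        have h3 : (q ∘ₗ N.subtype) nn = ψ nn := by rw [hq3]
        exact h3
    have hreal2 : ∀ t : Finset (Q × F), (t : Set (Q × F)) ⊆ P → ∃ g : Module.Dual F Q, ∀ p ∈ t, g p.1 = p.2 := hreal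
    obtain ⟨g, hg⟩ : ∃ g : Module.Dual F Q, ∀ p ∈ P, g p.1 = p.2 := ext_prescription P hreal2
    refine ⟨g, fun p hp => hg p (Or.inl hp), fun a ha => ?_⟩
    -- g restricted to N equals ψ
    have hgN : g ∘ₗ N.subtype = ψ := by
      apply LinearMap.ext
      intro nn
      have := hg ((nn : Q), ψ nn) (Or.inr ⟨nn, rfl⟩)
      simpa using this
    obtain ⟨q, _, hq2, hq3⟩ := hψG₀
    have := dep N (hgN.trans hq3.symm) (hNmem a ha)
    rw [this]
    exact hq2 a ha
  -- apply Zorn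
  have hGoodEmpty : Good ∅ := by
    intro s
    obtain ⟨q, hq⟩ := h s
    exact ⟨q, by simp, hq⟩
  obtain ⟨Gm, -, hGmmax⟩ := zorn_subset_nonempty {G | Good G} hchain ∅ hGoodEmpty
  have hGmGood : Good Gm := hGmmax.prop
  -- every point of Q is in the domain of Gm
  have hdom : ∀ q₀ : Q, ∃ c : F, (q₀, c) ∈ Gm := by
    intro q₀
    set Y : Finset A → Set F := fun s =>
      {t | ∃ q : Module.Dual F Q, (∀ p ∈ Gm, q p.1 = p.2) ∧
        (∀ a ∈ s, cosuppL ρ q a = f a) ∧ q q₀ = t} with hY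
    have hYne : ∀ s, (Y s).Nonempty := by
      intro s
      obtain ⟨q, hq1, hq2⟩ := hGmGood s
      exact ⟨q q₀, q, hq1, hq2, rfl⟩
    have hYmono : ∀ s s' : Finset A, s ⊆ s' → Y s' ⊆ Y s := by
      rintro s s' hss' t ⟨q, hq1, hq2, hq3⟩
      exact ⟨q, hq1, fun a ha => hq2 a (hss' ha), hq3⟩
    have hgoodc : ∃ c : F, ∀ s : Finset A, c ∈ Y s := by
      by_cases hcase : ∃ s₀ : Finset A, ∃ t₀ : F, Y s₀ ⊆ {t₀}
      · obtain ⟨s₀, t₀, hs₀⟩ := hcase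
        refine ⟨t₀, fun s => ?_⟩
        obtain ⟨t, ht⟩ := hYne (s ∪ s₀)
        have ht₀ : t = t₀ := hs₀ (hYmono _ _ Finset.subset_union_right ht)
        subst ht₀
        exact hYmono _ _ Finset.subset_union_left ht
      · push_neg at hcase
        refine ⟨0, fun s => ?_⟩
        obtain ⟨t₁, ht₁⟩ := hYne s
        obtain ⟨t₂, ht₂, ht₂ne⟩ : ∃ t₂ ∈ Y s, t₂ ≠ t₁ := by
          by_contra hcon
          push_neg at hcon
          exact hcase s t₁ (fun t ht => hcon t ht)
        -- affine combination giving 0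
        obtain ⟨q₁, hq11, hq12, hq13⟩ := ht₁
        obtain ⟨q₂, hq21, hq22, hq23⟩ := ht₂
        set lam : F := t₂ / (t₂ - t₁) with hlam
        refine ⟨lam • q₁ + (1 - lam) • q₂, fun p hp => ?_, fun a ha => ?_, ?_⟩
        · simp only [LinearMap.add_apply, LinearMap.smul_apply, hq11 p hp, hq21 p hp,
            smul_eq_mul]
          ring
        · simp only [map_add, map_smul, LinearMap.add_apply, LinearMap.smul_apply,
            hq12 a ha, hq22 a ha, smul_eq_mul]
          rw [← add_smul]
          simp
        · simp only [LinearMap.add_apply, LinearMap.smul_apply, hq13, hq23, smul_eq_mul, hlam]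
          have hne : t₂ - t₁ ≠ 0 := sub_ne_zero.mpr ht₂ne
          field_simp
          ring
    obtain ⟨c, hc⟩ := hgoodc
    have hGoodExt : Good (Gm ∪ {(q₀, c)}) := by
      intro s
      obtain ⟨q, hq1, hq2, hq3⟩ := hc s
      refine ⟨q, fun p hp => ?_, hq2⟩
      rcases hp with hp | hp
      · exact hq1 p hp
      · rcases hp with rfl
        exact hq3
    have hsub : Gm ∪ {(q₀, c)} ⊆ Gm :=
      hGmmax.2 hGoodExt Set.subset_union_left
    exact ⟨c, hsub (Or.inr rfl)⟩
  -- conclude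
  obtain ⟨q₀, hq₀, -⟩ := hGmGood ∅
  refine ⟨q₀, ?_⟩
  apply LinearMap.ext
  intro a
  obtain ⟨q₁, hq₁, hq₁sol⟩ := hGmGood {a}
  have : q₀ = q₁ := by
    apply LinearMap.ext
    intro x
    obtain ⟨c, hc⟩ := hdom x
    rw [hq₀ (x, c) hc, hq₁ (x, c) hc]
  rw [this]
  exact hq₁sol a (Finset.mem_singleton_self a)

/-- The cosupport `{(id_B ⊗ q^*) ∘ ρ | q^* ∈ Q^*}` of any linear map `ρ : A → B ⊗ Q`
is closed in the finite topology on `Hom_F(A,B)`. -/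
theorem lcosupp_isClosed (ρ : A →ₗ[F] B ⊗[F] Q) :
    @IsClosed _ (finiteTopology F A B) ((lcosupp ρ : Submodule F (A →ₗ[F] B)) : Set (A →ₗ[F] B)) := by
  classical
  letI tB : TopologicalSpace B := ⊥
  haveI : DiscreteTopology B := ⟨rfl⟩
  letI tL : TopologicalSpace (A →ₗ[F] B) := finiteTopology F A B
  rw [← isOpen_compl_iff, isOpen_iff_forall_mem_open]
  intro f hf
  have hnot : ¬∃ q : Module.Dual F Q, cosuppL ρ q = f := by
    simpa [lcosupp, LinearMap.mem_range] using hf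
  have hns : ¬∀ s : Finset A, ∃ q : Module.Dual F Q, ∀ a ∈ s, cosuppL ρ q a = f a :=
    fun hall => hnot (main_lemma ρ f hall)
  push_neg at hns
  obtain ⟨s, hs⟩ := hns
  refine ⟨{g : A →ₗ[F] B | ∀ a ∈ s, g a = f a}, ?_, ?_, fun a ha => rfl⟩
  · rintro g hgW hgmem
    obtain ⟨q, rfl⟩ := hgmem
    obtain ⟨a, has, hane⟩ := hs q
    exact hane (hgW a has)
  · have hU : IsOpen {h : A → B | ∀ a ∈ s, h a = f a} := by
      have : {h : A → B | ∀ a ∈ s, h a = f a} = ⋂ a ∈ s, (fun h : A → B => h a) ⁻¹' {f a} := by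
        ext h
        simp
      rw [this]
      exact isOpen_biInter_finset fun a _ =>
        (continuous_apply a).isOpen_preimage _ (isOpen_discrete _)
    exact isOpen_induced hU
end

section
/- Let $V$ be a vector space over a field $F$. Then the canonical image of $V$ in its double dual $V^{**}$ is dense in the finite topology: for every finite dimensional subspace $T \subseteq V^*$ and every $v^{**} \in V^{**}$, there exists $v \in V$ such that $v^{**}(t) = t(v)$ for all $t \in T$. -/
/-- A vector space `V` is dense in its double dual `V^{**}` in the finite topology:
for every finite dimensional subspace `T ⊆ V^*` and every `v^{**} ∈ V^{**}` there exists
`v ∈ V` with `v^{**}(t) = t(v)` for all `t ∈ T`. -/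
theorem dense_in_double_dual {F V : Type*} [Field F] [AddCommGroup V] [Module F V]
    (T : Submodule F (Module.Dual F V)) (hT : FiniteDimensional F T)
    (vdd : Module.Dual F (Module.Dual F V)) :
    ∃ v : V, ∀ t ∈ T, vdd t = t v := by
  obtain ⟨q, hq⟩ := (Subspace.quotDualCoannihilatorToDual_bijective T).2 (vdd.comp T.subtype)
  obtain ⟨v, rfl⟩ := Submodule.Quotient.mk_surjective _ q
  refine ⟨v, fun t ht => ?_⟩
  have := congrFun (congrArg DFunLike.coe hq) ⟨t, ht⟩
  simpa [Submodule.quotDualCoannihilatorToDual_apply] using this.symm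
end
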